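/- Let f be an arithmetic function of two variables and g a C^1 function on [0,∞)^2. For real x1, x2 ≥ 1, writing S(x1,x2;f) = Σ_{1≤n1≤x1} Σ_{1≤n2≤x2} f(n1,n2), one has S(x1,x2; f·g) = g(x1,x2) S(x1,x2;f) − ∫_0^{x1} S(t1,x2;f) ∂₁g(t1,x2) dt1 − ∫_0^{x2} S(x1,t2;f) ∂₂g(x1,t2) dt2 + ∫_0^{x1} ∫_0^{x2} S(t1,t2;f) ∂₁∂₂g(t1,t2) dt1 dt2. -/

import Mathlib

open MeasureTheory

/-- On `(0, x]`, the step-function sum times `h` equals a finite sum of indicators. -/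
lemma abel2_step_eq (c : ℕ → ℂ) (h : ℝ → ℂ) (x : ℝ) :
    ∀ t ∈ Set.Ioc (0:ℝ) x,
      (∑ n ∈ Finset.Icc 1 ⌊t⌋₊, c n) * h t
        = ∑ n ∈ Finset.Icc 1 ⌊x⌋₊,
            Set.indicator (Set.Ici (n:ℝ)) (fun s => c n * h s) t := by
  intro t ht
  have ht0 : (0:ℝ) ≤ t := ht.1.le
  have hfl : ⌊t⌋₊ ≤ ⌊x⌋₊ := Nat.floor_le_floor ht.2
  rw [Finset.sum_mul, ← Finset.sum_subset (Finset.Icc_subset_Icc_right hfl)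
    (fun n hn hn' => ?_)]
  · refine Finset.sum_congr rfl fun n hn => ?_
    have h2 : n ≤ ⌊t⌋₊ := (Finset.mem_Icc.mp hn).2
    rw [Set.indicator_of_mem (Set.mem_Ici.mpr ((Nat.le_floor_iff ht0).mp h2))]
  · have h1 : 1 ≤ n := (Finset.mem_Icc.mp hn).1
    have h2 : ⌊t⌋₊ < n := by
      by_contra hle
      exact hn' (Finset.mem_Icc.mpr ⟨h1, le_of_not_gt hle⟩)
    have hlt : t < (n:ℝ) := (Nat.floor_lt ht0).mp h2
    rw [Set.indicator_of_notMem (by simpa using not_le.mpr hlt)]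

lemma abel2_integrableOn (c : ℕ → ℂ) (h : ℝ → ℂ) (x : ℝ)
    (hh : IntegrableOn h (Set.Ioc 0 x)) :
    IntegrableOn (fun t => (∑ n ∈ Finset.Icc 1 ⌊t⌋₊, c n) * h t) (Set.Ioc 0 x) := by
  have hF : IntegrableOn (fun t => ∑ n ∈ Finset.Icc 1 ⌊x⌋₊,
      Set.indicator (Set.Ici (n:ℝ)) (fun s => c n * h s) t) (Set.Ioc 0 x) :=
    integrable_finset_sum _ fun n _ =>
      ((hh.const_mul (c n)).indicator measurableSet_Ici)
  exact hF.congr_fun (fun t ht => (abel2_step_eq c h x t ht).symm) measurableSet_Ioc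

/-- Sum–integral interchange against a step function. -/
lemma abel2_interchange (c : ℕ → ℂ) (h : ℝ → ℂ) (x : ℝ) (hx : 1 ≤ x)
    (hh : IntegrableOn h (Set.Ioc 0 x)) :
    ∫ t in (0:ℝ)..x, (∑ n ∈ Finset.Icc 1 ⌊t⌋₊, c n) * h t
      = ∑ n ∈ Finset.Icc 1 ⌊x⌋₊, c n * ∫ t in (n:ℝ)..x, h t := by
  have h0 : (0:ℝ) ≤ x := by linarith
  rw [intervalIntegral.integral_of_le h0,
    setIntegral_congr_fun measurableSet_Ioc (abel2_step_eq c h x),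
    integral_finset_sum _ (fun n _ => (hh.const_mul (c n)).indicator measurableSet_Ici)]
  refine Finset.sum_congr rfl fun n hn => ?_
  obtain ⟨hn1, hn2⟩ := Finset.mem_Icc.mp hn
  have hnx : (n:ℝ) ≤ x := (Nat.le_floor_iff h0).mp hn2
  have hset : Set.Ioc (0:ℝ) x ∩ Set.Ici (n:ℝ) = Set.Icc (n:ℝ) x := by
    ext t
    simp only [Set.mem_inter_iff, Set.mem_Ioc, Set.mem_Ici, Set.mem_Icc]
    constructor
    · rintro ⟨⟨_, h2⟩, h3⟩; exact ⟨h3, h2⟩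
    · rintro ⟨ha, hb⟩
      have : (1:ℝ) ≤ n := by exact_mod_cast hn1
      exact ⟨⟨by linarith, hb⟩, ha⟩
  rw [setIntegral_indicator measurableSet_Ici, hset,
    integral_Icc_eq_integral_Ioc, ← intervalIntegral.integral_of_le hnx,
    intervalIntegral.integral_const_mul]

/-- FTC in the first variable. -/
lemma abel2_ftc1 (G G' : ℝ → ℝ → ℂ) (y : ℝ) (hy : 0 ≤ y)
    (hd : ∀ t1 t2 : ℝ, 0 ≤ t1 → 0 ≤ t2 → HasDerivAt (fun t => G t t2) (G' t1 t2) t1)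
    (hc : ContinuousOn (fun p : ℝ × ℝ => G' p.1 p.2) (Set.Ici 0 ×ˢ Set.Ici 0))
    (a b : ℝ) (ha : 0 ≤ a) (hab : a ≤ b) :
    ∫ t in a..b, G' t y = G b y - G a y := by
  have hcont : ContinuousOn (fun t => G' t y) (Set.uIcc a b) := by
    rw [Set.uIcc_of_le hab]
    exact hc.comp (f := fun t : ℝ => (t, y))
      ((continuous_id.prodMk continuous_const).continuousOn)
      (fun t ht => Set.mem_prod.mpr ⟨ha.trans ht.1, hy⟩)
  refine intervalIntegral.integral_eq_sub_of_hasDerivAt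
    (f := fun t => G t y) (f' := fun t => G' t y) (fun t ht => ?_)
    hcont.intervalIntegrable
  rw [Set.uIcc_of_le hab] at ht
  exact hd t y (ha.trans ht.1) hy

/-- FTC in the second variable. -/
lemma abel2_ftc2 (G G' : ℝ → ℝ → ℂ) (s : ℝ) (hs : 0 ≤ s)
    (hd : ∀ t1 t2 : ℝ, 0 ≤ t1 → 0 ≤ t2 → HasDerivAt (fun t => G t1 t) (G' t1 t2) t2)
    (hc : ContinuousOn (fun p : ℝ × ℝ => G' p.1 p.2) (Set.Ici 0 ×ˢ Set.Ici 0))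
    (a b : ℝ) (ha : 0 ≤ a) (hab : a ≤ b) :
    ∫ t in a..b, G' s t = G s b - G s a := by
  have hcont : ContinuousOn (fun t => G' s t) (Set.uIcc a b) := by
    rw [Set.uIcc_of_le hab]
    exact hc.comp (f := fun t : ℝ => (s, t))
      ((continuous_const.prodMk continuous_id).continuousOn)
      (fun t ht => Set.mem_prod.mpr ⟨hs, ha.trans ht.1⟩)
  refine intervalIntegral.integral_eq_sub_of_hasDerivAt
    (f := fun t => G s t) (f' := fun t => G' s t) (fun t ht => ?_)
    hcont.intervalIntegrable
  rw [Set.uIcc_of_le hab] at ht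
  exact hd s t hs (ha.trans ht.1)

lemma abel2_cont1 (G' : ℝ → ℝ → ℂ)
    (hc : ContinuousOn (fun p : ℝ × ℝ => G' p.1 p.2) (Set.Ici 0 ×ˢ Set.Ici 0))
    (y : ℝ) (hy : 0 ≤ y) (x : ℝ) (hx : 0 ≤ x) :
    IntegrableOn (fun t => G' t y) (Set.Ioc 0 x) := by
  have hcont : ContinuousOn (fun t => G' t y) (Set.Icc 0 x) :=
    hc.comp (f := fun t : ℝ => (t, y))
      ((continuous_id.prodMk continuous_const).continuousOn)
      (fun t ht => Set.mem_prod.mpr ⟨ht.1, hy⟩)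
  exact hcont.integrableOn_Icc.mono_set Set.Ioc_subset_Icc_self

lemma abel2_cont2 (G' : ℝ → ℝ → ℂ)
    (hc : ContinuousOn (fun p : ℝ × ℝ => G' p.1 p.2) (Set.Ici 0 ×ˢ Set.Ici 0))
    (s : ℝ) (hs : 0 ≤ s) (x : ℝ) (hx : 0 ≤ x) :
    IntegrableOn (fun t => G' s t) (Set.Ioc 0 x) := by
  have hcont : ContinuousOn (fun t => G' s t) (Set.Icc 0 x) :=
    hc.comp (f := fun t : ℝ => (s, t))
      ((continuous_const.prodMk continuous_id).continuousOn)
      (fun t ht => Set.mem_prod.mpr ⟨hs, ht.1⟩)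
  exact hcont.integrableOn_Icc.mono_set Set.Ioc_subset_Icc_self

/-- Two-dimensional Abel summation: `S x1 x2 f` is the double partial sum of `f`. -/
theorem abel_summation_two_variables
    (f : ℕ → ℕ → ℂ) (g g1 g2 g12 : ℝ → ℝ → ℂ)
    (S : ℝ → ℝ → ℂ)
    (hS : ∀ x1 x2 : ℝ, S x1 x2 =
      ∑ n1 ∈ Finset.Icc 1 ⌊x1⌋₊, ∑ n2 ∈ Finset.Icc 1 ⌊x2⌋₊, f n1 n2)
    (hg1 : ∀ t1 t2 : ℝ, 0 ≤ t1 → 0 ≤ t2 →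
      HasDerivAt (fun t => g t t2) (g1 t1 t2) t1)
    (hg2 : ∀ t1 t2 : ℝ, 0 ≤ t1 → 0 ≤ t2 →
      HasDerivAt (fun t => g t1 t) (g2 t1 t2) t2)
    (hg12 : ∀ t1 t2 : ℝ, 0 ≤ t1 → 0 ≤ t2 →
      HasDerivAt (fun t => g1 t1 t) (g12 t1 t2) t2)
    (hc1 : ContinuousOn (fun p : ℝ × ℝ => g1 p.1 p.2) (Set.Ici 0 ×ˢ Set.Ici 0))
    (hc2 : ContinuousOn (fun p : ℝ × ℝ => g2 p.1 p.2) (Set.Ici 0 ×ˢ Set.Ici 0))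
    (hc12 : ContinuousOn (fun p : ℝ × ℝ => g12 p.1 p.2) (Set.Ici 0 ×ˢ Set.Ici 0))
    (x1 x2 : ℝ) (hx1 : 1 ≤ x1) (hx2 : 1 ≤ x2) :
    (∑ n1 ∈ Finset.Icc 1 ⌊x1⌋₊, ∑ n2 ∈ Finset.Icc 1 ⌊x2⌋₊,
        f n1 n2 * g (n1 : ℝ) (n2 : ℝ))
      = g x1 x2 * S x1 x2
        - (∫ t1 in (0:ℝ)..x1, S t1 x2 * g1 t1 x2)
        - (∫ t2 in (0:ℝ)..x2, S x1 t2 * g2 x1 t2)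
        + ∫ t1 in (0:ℝ)..x1, ∫ t2 in (0:ℝ)..x2, S t1 t2 * g12 t1 t2 := by
  have h01 : (0:ℝ) ≤ x1 := by linarith
  have h02 : (0:ℝ) ≤ x2 := by linarith
  have hmem1 : ∀ n ∈ Finset.Icc 1 ⌊x1⌋₊, (0:ℝ) ≤ (n:ℝ) ∧ (n:ℝ) ≤ x1 := by
    intro n hn
    exact ⟨Nat.cast_nonneg n, (Nat.le_floor_iff h01).mp (Finset.mem_Icc.mp hn).2⟩
  have hmem2 : ∀ n ∈ Finset.Icc 1 ⌊x2⌋₊, (0:ℝ) ≤ (n:ℝ) ∧ (n:ℝ) ≤ x2 := by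
    intro n hn
    exact ⟨Nat.cast_nonneg n, (Nat.le_floor_iff h02).mp (Finset.mem_Icc.mp hn).2⟩
  -- First integral
  have E1 : (∫ t1 in (0:ℝ)..x1, S t1 x2 * g1 t1 x2)
      = ∑ n1 ∈ Finset.Icc 1 ⌊x1⌋₊, ∑ n2 ∈ Finset.Icc 1 ⌊x2⌋₊,
          f n1 n2 * (g x1 x2 - g (n1:ℝ) x2) := by
    simp_rw [hS]
    rw [abel2_interchange (fun n1 => ∑ n2 ∈ Finset.Icc 1 ⌊x2⌋₊, f n1 n2)
      (fun t => g1 t x2) x1 hx1 (abel2_cont1 g1 hc1 x2 h02 x1 h01)]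
    refine Finset.sum_congr rfl fun n hn => ?_
    rw [abel2_ftc1 g g1 x2 h02 hg1 hc1 (n:ℝ) x1 (hmem1 n hn).1 (hmem1 n hn).2,
      Finset.sum_mul]
  -- Second integral
  have E2 : (∫ t2 in (0:ℝ)..x2, S x1 t2 * g2 x1 t2)
      = ∑ n1 ∈ Finset.Icc 1 ⌊x1⌋₊, ∑ n2 ∈ Finset.Icc 1 ⌊x2⌋₊,
          f n1 n2 * (g x1 x2 - g x1 (n2:ℝ)) := by
    have hSrw : ∀ t, S x1 t
        = ∑ n2 ∈ Finset.Icc 1 ⌊t⌋₊, ∑ n1 ∈ Finset.Icc 1 ⌊x1⌋₊, f n1 n2 :=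
      fun t => (hS x1 t).trans Finset.sum_comm
    simp_rw [hSrw]
    rw [abel2_interchange (fun n2 => ∑ n1 ∈ Finset.Icc 1 ⌊x1⌋₊, f n1 n2)
      (fun t => g2 x1 t) x2 hx2 (abel2_cont2 g2 hc2 x1 h01 x2 h02)]
    rw [Finset.sum_comm]
    refine Finset.sum_congr rfl fun m hm => ?_
    rw [abel2_ftc2 g g2 x1 h01 hg2 hc2 (m:ℝ) x2 (hmem2 m hm).1 (hmem2 m hm).2,
      Finset.sum_mul]
  -- Integrability of step × continuous on [0, x1]
  have hInt : ∀ n2 ∈ Finset.Icc 1 ⌊x2⌋₊, IntervalIntegrable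
      (fun t1 => (∑ n1 ∈ Finset.Icc 1 ⌊t1⌋₊, f n1 n2) * (g1 t1 x2 - g1 t1 (n2:ℝ)))
      MeasureTheory.volume 0 x1 := by
    intro n2 hn2
    refine (intervalIntegrable_iff_integrableOn_Ioc_of_le h01).mpr
      (abel2_integrableOn _ (fun t => g1 t x2 - g1 t (n2:ℝ)) x1 ?_)
    exact (abel2_cont1 g1 hc1 x2 h02 x1 h01).sub
      (abel2_cont1 g1 hc1 (n2:ℝ) (Nat.cast_nonneg n2) x1 h01)
  -- Double integral
  have E3 : (∫ t1 in (0:ℝ)..x1, ∫ t2 in (0:ℝ)..x2, S t1 t2 * g12 t1 t2)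
      = ∑ n1 ∈ Finset.Icc 1 ⌊x1⌋₊, ∑ n2 ∈ Finset.Icc 1 ⌊x2⌋₊,
          f n1 n2 * ((g x1 x2 - g (n1:ℝ) x2) - (g x1 (n2:ℝ) - g (n1:ℝ) (n2:ℝ))) := by
    have step1 : Set.EqOn (fun t1 => ∫ t2 in (0:ℝ)..x2, S t1 t2 * g12 t1 t2)
        (fun t1 => ∑ n2 ∈ Finset.Icc 1 ⌊x2⌋₊,
          (∑ n1 ∈ Finset.Icc 1 ⌊t1⌋₊, f n1 n2) * (g1 t1 x2 - g1 t1 (n2:ℝ)))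
        (Set.uIcc 0 x1) := by
      intro t1 ht1
      have ht10 : (0:ℝ) ≤ t1 := by
        rw [Set.uIcc_of_le h01] at ht1; exact ht1.1
      have hSrw : ∀ t2, S t1 t2
          = ∑ n2 ∈ Finset.Icc 1 ⌊t2⌋₊, ∑ n1 ∈ Finset.Icc 1 ⌊t1⌋₊, f n1 n2 :=
        fun t2 => (hS t1 t2).trans Finset.sum_comm
      simp only
      simp_rw [hSrw]
      rw [abel2_interchange (fun n2 => ∑ n1 ∈ Finset.Icc 1 ⌊t1⌋₊, f n1 n2)
        (fun t => g12 t1 t) x2 hx2 (abel2_cont2 g12 hc12 t1 ht10 x2 h02)]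
      refine Finset.sum_congr rfl fun n hn => ?_
      rw [abel2_ftc2 g1 g12 t1 ht10 hg12 hc12 (n:ℝ) x2 (hmem2 n hn).1 (hmem2 n hn).2]
    rw [intervalIntegral.integral_congr step1,
      intervalIntegral.integral_finset_sum hInt]
    refine (Finset.sum_congr rfl fun n2 hn2 => ?_).trans Finset.sum_comm
    rw [abel2_interchange (fun n1 => f n1 n2) (fun t => g1 t x2 - g1 t (n2:ℝ)) x1 hx1
      ((abel2_cont1 g1 hc1 x2 h02 x1 h01).sub
        (abel2_cont1 g1 hc1 (n2:ℝ) (Nat.cast_nonneg n2) x1 h01))]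
    refine Finset.sum_congr rfl fun n1 hn1 => ?_
    have ia : IntervalIntegrable (fun t => g1 t x2) MeasureTheory.volume (n1:ℝ) x1 :=
      (intervalIntegrable_iff_integrableOn_Ioc_of_le (hmem1 n1 hn1).2).mpr
        ((abel2_cont1 g1 hc1 x2 h02 x1 h01).mono_set
          (Set.Ioc_subset_Ioc_left (hmem1 n1 hn1).1))
    have ib : IntervalIntegrable (fun t => g1 t (n2:ℝ)) MeasureTheory.volume (n1:ℝ) x1 :=
      (intervalIntegrable_iff_integrableOn_Ioc_of_le (hmem1 n1 hn1).2).mpr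
        ((abel2_cont1 g1 hc1 (n2:ℝ) (Nat.cast_nonneg n2) x1 h01).mono_set
          (Set.Ioc_subset_Ioc_left (hmem1 n1 hn1).1))
    rw [intervalIntegral.integral_sub ia ib,
      abel2_ftc1 g g1 x2 h02 hg1 hc1 (n1:ℝ) x1 (hmem1 n1 hn1).1 (hmem1 n1 hn1).2,
      abel2_ftc1 g g1 (n2:ℝ) (Nat.cast_nonneg n2) hg1 hc1 (n1:ℝ) x1
        (hmem1 n1 hn1).1 (hmem1 n1 hn1).2]
  -- Assemble
  rw [E1, E2, E3, hS x1 x2, Finset.mul_sum]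
  simp_rw [Finset.mul_sum]
  simp only [← Finset.sum_sub_distrib, ← Finset.sum_add_distrib]
  refine Finset.sum_congr rfl fun n1 _ => Finset.sum_congr rfl fun n2 _ => ?_
  ring
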